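/- Let R be a commutative ring and A a commutative R-bialgebra with comultiplication Δ : A → A ⊗_R A and counit ε : A → R (an R-algebra homomorphism). Let I := ker ε, for n ∈ ℕ let Dist_n := { u ∈ Hom_R(A, R) : u vanishes on I^{n+1} }, and equip Hom_R(A,R) with the convolution product u * v := mult_R ∘ (u ⊗ v) ∘ Δ. Then for all n, n' ∈ ℕ with n + n' ≥ 1, if u ∈ Dist_n and v ∈ Dist_{n'}, then the commutator u * v − v * u lies in Dist_{n+n'−1}. -/

import Mathlib

open scoped TensorProduct
open TensorProduct LinearMap Coalgebra


section DistAux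

variable (R : Type*) [CommRing R] (A : Type*) [CommRing A] [Bialgebra R A]

/-- left inclusion as a ring hom -/
noncomputable def inclL : A →+* A ⊗[R] A :=
  (Algebra.TensorProduct.includeLeft : A →ₐ[R] A ⊗[R] A).toRingHom

/-- right inclusion as a ring hom -/
noncomputable def inclR : A →+* A ⊗[R] A :=
  (Algebra.TensorProduct.includeRight : A →ₐ[R] A ⊗[R] A).toRingHom

/-- the flip as a ring hom -/
noncomputable def commRH : A ⊗[R] A →+* A ⊗[R] A :=
  ((Algebra.TensorProduct.comm R A A).toAlgHom : A ⊗[R] A →ₐ[R] A ⊗[R] A).toRingHom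

@[simp] lemma inclL_apply (a : A) : inclL R A a = a ⊗ₜ[R] 1 := rfl
@[simp] lemma inclR_apply (a : A) : inclR R A a = (1 : A) ⊗ₜ[R] a := rfl
@[simp] lemma commRH_apply (a b : A) : commRH R A (a ⊗ₜ[R] b) = b ⊗ₜ[R] a := rfl

/-- augmentation ideal -/
noncomputable def augI : Ideal A := RingHom.ker (Bialgebra.counitAlgHom R A)

noncomputable def distL (p : Ideal A) : Ideal (A ⊗[R] A) := Ideal.map (inclL R A) p
noncomputable def distR (p : Ideal A) : Ideal (A ⊗[R] A) := Ideal.map (inclR R A) p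

/-- the `k`-th piece of the tensor-square filtration -/
noncomputable def distF (k : ℕ) : Ideal (A ⊗[R] A) :=
  ⨆ (p : ℕ × ℕ) (_ : p.1 + p.2 = k),
    distL R A (augI R A ^ p.1) * distR R A (augI R A ^ p.2)

variable {R A}

lemma mem_augI {x : A} : x ∈ augI R A ↔ Coalgebra.counit (R := R) x = 0 :=
  Iff.rfl

lemma tmul_mem_mul {p q : Ideal A} {a b : A} (ha : a ∈ p) (hb : b ∈ q) :
    a ⊗ₜ[R] b ∈ distL R A p * distR R A q := by
  have h : a ⊗ₜ[R] b = (a ⊗ₜ[R] (1 : A)) * ((1 : A) ⊗ₜ[R] b) := by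
    simp [Algebra.TensorProduct.tmul_mul_tmul]
  rw [h]
  exact Ideal.mul_mem_mul (Ideal.mem_map_of_mem _ ha) (Ideal.mem_map_of_mem _ hb)

lemma mem_distF {a b k : ℕ} (h : a + b = k) {z : A ⊗[R] A}
    (hz : z ∈ distL R A (augI R A ^ a) * distR R A (augI R A ^ b)) :
    z ∈ distF R A k :=
  Submodule.mem_iSup_of_mem (a, b) (Submodule.mem_iSup_of_mem h hz)

lemma distF_le {k : ℕ} {K : Ideal (A ⊗[R] A)}
    (h : ∀ a b : ℕ, a + b = k → distL R A (augI R A ^ a) * distR R A (augI R A ^ b) ≤ K) :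
    distF R A k ≤ K :=
  iSup_le fun p => iSup_le fun hp => h p.1 p.2 hp

lemma distF_mul (j k : ℕ) : distF R A j * distF R A k ≤ distF R A (j + k) := by
  rw [distF, Submodule.iSup_mul]
  refine iSup_le fun p => ?_
  rw [Submodule.iSup_mul]
  refine iSup_le fun hp => ?_
  rw [distF, Submodule.mul_iSup]
  refine iSup_le fun q => ?_
  rw [Submodule.mul_iSup]
  refine iSup_le fun hq => ?_
  have e1 : distL R A (augI R A ^ p.1) * distR R A (augI R A ^ p.2) *
      (distL R A (augI R A ^ q.1) * distR R A (augI R A ^ q.2)) =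
      distL R A (augI R A ^ (p.1 + q.1)) * distR R A (augI R A ^ (p.2 + q.2)) := by
    rw [mul_mul_mul_comm, distL, distL, distL, distR, distR, distR,
      ← Ideal.map_mul, ← Ideal.map_mul, ← pow_add, ← pow_add]
  rw [e1]
  exact le_iSup₂_of_le (p.1 + q.1, p.2 + q.2) (by omega) le_rfl

end DistAux


section Part2

variable {R : Type*} [CommRing R] {A : Type*} [CommRing A] [Bialgebra R A]

/-- projection onto the augmentation ideal -/
noncomputable def augProj (R : Type*) [CommRing R] (A : Type*) [CommRing A] [Bialgebra R A] :
    A →ₗ[R] A :=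
  LinearMap.id - (Algebra.linearMap R A) ∘ₗ (Coalgebra.counit : A →ₗ[R] R)

lemma augProj_mem (a : A) : augProj R A a ∈ RingHom.ker (Bialgebra.counitAlgHom R A) := by
  simp [augProj, RingHom.mem_ker, map_sub]

lemma augProj_apply_of_counit_eq_zero {x : A} (hx : Coalgebra.counit (R := R) x = 0) :
    augProj R A x = x := by
  simp [augProj, hx]

lemma key1 {x : A} (hx : Coalgebra.counit (R := R) x = 0) :
    comul (R := R) x - x ⊗ₜ[R] (1 : A) - (1 : A) ⊗ₜ[R] x ∈
      distL R A (RingHom.ker (Bialgebra.counitAlgHom R A)) *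
        distR R A (RingHom.ker (Bialgebra.counitAlgHom R A)) := by
  set π := augProj R A with hπ
  have h1 : (π.rTensor A) (comul (R := R) x) = comul x - (1 : A) ⊗ₜ[R] x := by
    rw [hπ, augProj, LinearMap.rTensor_sub, LinearMap.sub_apply, LinearMap.rTensor_id,
      LinearMap.rTensor_comp, LinearMap.comp_apply, Coalgebra.rTensor_counit_comul,
      LinearMap.id_apply, LinearMap.rTensor_tmul]
    simp
  have h2 : (π.lTensor A) (comul (R := R) x) = comul x - x ⊗ₜ[R] (1 : A) := by
    rw [hπ, augProj, LinearMap.lTensor_sub, LinearMap.sub_apply, LinearMap.lTensor_id,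
      LinearMap.lTensor_comp, LinearMap.comp_apply, Coalgebra.lTensor_counit_comul,
      LinearMap.id_apply, LinearMap.lTensor_tmul]
    simp
  have h3 : TensorProduct.map π π (comul (R := R) x)
      = comul x - x ⊗ₜ[R] (1 : A) - (1 : A) ⊗ₜ[R] x := by
    rw [← LinearMap.lTensor_comp_rTensor, LinearMap.comp_apply, h1, map_sub, h2,
      LinearMap.lTensor_tmul, augProj_apply_of_counit_eq_zero hx]
  rw [← h3]
  induction comul (R := R) x using TensorProduct.induction_on with
  | zero => simpa using zero_mem _
  | tmul a b =>
      rw [TensorProduct.map_tmul]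
      exact tmul_mem_mul (augProj_mem a) (augProj_mem b)
  | add y z hy hz =>
      rw [map_add]
      exact add_mem hy hz

end Part2
section Part3

variable {R : Type*} [CommRing R] {A : Type*} [CommRing A] [Bialgebra R A]

lemma distLR_le_distF {a b k : ℕ} (h : a + b = k) :
    distL R A (augI R A ^ a) * distR R A (augI R A ^ b) ≤ distF R A k :=
  le_iSup₂_of_le (a, b) h le_rfl

lemma tmul_one_mem_distF {x : A} (hx : x ∈ augI R A) :
    x ⊗ₜ[R] (1 : A) ∈ distF R A 1 := by
  refine mem_distF (a := 1) (b := 0) rfl ?_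
  exact tmul_mem_mul (by rwa [pow_one]) (by simp)

lemma one_tmul_mem_distF {x : A} (hx : x ∈ augI R A) :
    (1 : A) ⊗ₜ[R] x ∈ distF R A 1 := by
  refine mem_distF (a := 0) (b := 1) rfl ?_
  exact tmul_mem_mul (by simp) (by rwa [pow_one])

lemma key1' {x : A} (hx : x ∈ augI R A) :
    comul (R := R) x - x ⊗ₜ[R] (1 : A) - (1 : A) ⊗ₜ[R] x ∈
      distL R A (augI R A ^ 1) * distR R A (augI R A ^ 1) := by
  rw [pow_one]
  exact key1 hx

lemma comul_mem_distF_one {x : A} (hx : x ∈ augI R A) :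
    comul (R := R) x ∈ distF R A 1 := by
  have h1 : comul (R := R) x =
      (comul (R := R) x - x ⊗ₜ[R] (1 : A) - (1 : A) ⊗ₜ[R] x)
        + x ⊗ₜ[R] (1 : A) + (1 : A) ⊗ₜ[R] x := by abel
  rw [h1]
  refine add_mem (add_mem ?_ (tmul_one_mem_distF hx)) (one_tmul_mem_distF hx)
  have h2 : distL R A (augI R A ^ 1) * distR R A (augI R A ^ 1) ≤
      distL R A (augI R A ^ 1) * distR R A (augI R A ^ 0) :=
    Ideal.mul_mono le_rfl (Ideal.map_mono (by simp))
  exact distLR_le_distF (by norm_num) (h2 (key1' hx))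

lemma comul_mem_distF {k : ℕ} {x : A} (hx : x ∈ augI R A ^ k) :
    comul (R := R) x ∈ distF R A k := by
  induction k generalizing x with
  | zero =>
      refine mem_distF (a := 0) (b := 0) rfl ?_
      have h1 : distL R A (augI R A ^ 0) * distR R A (augI R A ^ 0) = ⊤ := by
        rw [Ideal.eq_top_iff_one]
        have h2 := Ideal.mul_mem_mul
          (Ideal.mem_map_of_mem (inclL R A) (show (1:A) ∈ augI R A ^ 0 by simp))
          (Ideal.mem_map_of_mem (inclR R A) (show (1:A) ∈ augI R A ^ 0 by simp))
        simpa [distL, distR, map_one] using h2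
      rw [h1]; trivial
  | succ m ih =>
      rw [pow_succ] at hx
      refine Submodule.mul_induction_on hx (fun a ha b hb => ?_) (fun y z hy hz => ?_)
      · rw [Bialgebra.comul_mul]
        exact distF_mul m 1 (Ideal.mul_mem_mul (ih ha) (comul_mem_distF_one hb))
      · rw [map_add]; exact add_mem hy hz

lemma commRH_comp_inclL : (commRH R A).comp (inclL R A) = inclR R A := by
  ext a; simp

lemma commRH_comp_inclR : (commRH R A).comp (inclR R A) = inclL R A := by
  ext a; simp

lemma commRH_mem_distF {k : ℕ} {z : A ⊗[R] A} (hz : z ∈ distF R A k) :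
    commRH R A z ∈ distF R A k := by
  have h : distF R A k ≤ Ideal.comap (commRH R A) (distF R A k) := by
    refine distF_le fun a b hab => ?_
    rw [← Ideal.map_le_iff_le_comap, Ideal.map_mul, distL, distR, Ideal.map_map,
      Ideal.map_map, commRH_comp_inclL, commRH_comp_inclR, mul_comm]
    exact distLR_le_distF (by omega)
  exact h hz

lemma comm_sub_mem_distF_one {x : A} (hx : x ∈ augI R A) :
    comul (R := R) x - commRH R A (comul (R := R) x) ∈ distF R A 2 := by
  set w := comul (R := R) x - x ⊗ₜ[R] (1 : A) - (1 : A) ⊗ₜ[R] x with hw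
  have h1 : comul (R := R) x - commRH R A (comul (R := R) x) = w - commRH R A w := by
    rw [hw, map_sub, map_sub, commRH_apply, commRH_apply]
    abel
  rw [h1]
  have h2 : w ∈ distF R A 2 := distLR_le_distF (by norm_num) (key1' hx)
  exact sub_mem h2 (commRH_mem_distF h2)

lemma comm_sub_mem_distF {k : ℕ} (hk : 1 ≤ k) {x : A} (hx : x ∈ augI R A ^ k) :
    comul (R := R) x - commRH R A (comul (R := R) x) ∈ distF R A (k + 1) := by
  induction k, hk using Nat.le_induction generalizing x with
  | base => exact comm_sub_mem_distF_one (by rwa [pow_one] at hx)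
  | succ m hm ih =>
      rw [pow_succ] at hx
      refine Submodule.mul_induction_on hx (fun a ha b hb => ?_) (fun y z hy hz => ?_)
      · have e : comul (R := R) (a * b) - commRH R A (comul (R := R) (a * b)) =
            (comul (R := R) a - commRH R A (comul (R := R) a)) * comul (R := R) b
            + commRH R A (comul (R := R) a) *
              (comul (R := R) b - commRH R A (comul (R := R) b)) := by
          rw [Bialgebra.comul_mul, map_mul]; ring
        rw [e]
        refine add_mem ?_ ?_
        · exact distF_mul (m + 1) 1
            (Ideal.mul_mem_mul (ih ha) (comul_mem_distF_one hb))
        · have h1 : commRH R A (comul (R := R) a) ∈ distF R A m :=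
            commRH_mem_distF (comul_mem_distF ha)
          have h2 : comul (R := R) b - commRH R A (comul (R := R) b) ∈ distF R A 2 :=
            comm_sub_mem_distF_one hb
          have h3 := distF_mul m 2 (Ideal.mul_mem_mul h1 h2)
          have hmm : m + 2 = m + 1 + 1 := by omega
          rwa [hmm] at h3
      · have e : comul (R := R) (y + z) - commRH R A (comul (R := R) (y + z)) =
            (comul (R := R) y - commRH R A (comul (R := R) y))
            + (comul (R := R) z - commRH R A (comul (R := R) z)) := by
          rw [map_add, map_add]; abel
        rw [e]; exact add_mem hy hz

end Part3
section Part4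

variable {R : Type*} [CommRing R] {A : Type*} [CommRing A] [Bialgebra R A]

/-- the submodule `p ⊗ A` of `A ⊗ A` -/
noncomputable def rangeL (R : Type*) [CommRing R] {A : Type*} [CommRing A] [Algebra R A]
    (p : Ideal A) : Submodule R (A ⊗[R] A) :=
  LinearMap.range (((Submodule.restrictScalars R p).subtype).rTensor A)

/-- the submodule `A ⊗ p` of `A ⊗ A` -/
noncomputable def rangeR (R : Type*) [CommRing R] {A : Type*} [CommRing A] [Algebra R A]
    (p : Ideal A) : Submodule R (A ⊗[R] A) :=
  LinearMap.range (((Submodule.restrictScalars R p).subtype).lTensor A)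

lemma mul_mem_rangeL {p : Ideal A} (c : A ⊗[R] A) {z : A ⊗[R] A}
    (hz : z ∈ rangeL R p) : c * z ∈ rangeL R p := by
  induction c using TensorProduct.induction_on with
  | zero => rw [zero_mul]; exact zero_mem _
  | add c₁ c₂ h₁ h₂ => rw [add_mul]; exact add_mem h₁ h₂
  | tmul a b =>
      obtain ⟨w, rfl⟩ := hz
      induction w using TensorProduct.induction_on with
      | zero => rw [map_zero, mul_zero]; exact zero_mem _
      | add w₁ w₂ h₁ h₂ => rw [map_add, mul_add]; exact add_mem h₁ h₂
      | tmul s y =>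
          rw [LinearMap.rTensor_tmul, Submodule.subtype_apply,
            Algebra.TensorProduct.tmul_mul_tmul]
          exact ⟨(⟨a * (s : A), Ideal.mul_mem_left p a s.2⟩ : (Submodule.restrictScalars R p)) ⊗ₜ[R] (b * y), rfl⟩

lemma mul_mem_rangeR {p : Ideal A} (c : A ⊗[R] A) {z : A ⊗[R] A}
    (hz : z ∈ rangeR R p) : c * z ∈ rangeR R p := by
  induction c using TensorProduct.induction_on with
  | zero => rw [zero_mul]; exact zero_mem _
  | add c₁ c₂ h₁ h₂ => rw [add_mul]; exact add_mem h₁ h₂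
  | tmul a b =>
      obtain ⟨w, rfl⟩ := hz
      induction w using TensorProduct.induction_on with
      | zero => rw [map_zero, mul_zero]; exact zero_mem _
      | add w₁ w₂ h₁ h₂ => rw [map_add, mul_add]; exact add_mem h₁ h₂
      | tmul y s =>
          rw [LinearMap.lTensor_tmul, Submodule.subtype_apply,
            Algebra.TensorProduct.tmul_mul_tmul]
          exact ⟨(a * y) ⊗ₜ[R] (⟨b * (s : A), Ideal.mul_mem_left p b s.2⟩ : (Submodule.restrictScalars R p)), rfl⟩

lemma distL_le_rangeL (p : Ideal A) : ∀ z ∈ distL R A p, z ∈ rangeL R p := by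
  intro z hz
  rw [distL, Ideal.map] at hz
  refine Submodule.span_induction (fun w hw => ?_) (zero_mem _)
    (fun w₁ w₂ _ _ h₁ h₂ => add_mem h₁ h₂) (fun c w _ h => ?_) hz
  · obtain ⟨x, hx, rfl⟩ := hw
    exact ⟨(⟨x, hx⟩ : (Submodule.restrictScalars R p)) ⊗ₜ[R] (1 : A), rfl⟩
  · rw [smul_eq_mul]; exact mul_mem_rangeL c h

lemma distR_le_rangeR (p : Ideal A) : ∀ z ∈ distR R A p, z ∈ rangeR R p := by
  intro z hz
  rw [distR, Ideal.map] at hz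
  refine Submodule.span_induction (fun w hw => ?_) (zero_mem _)
    (fun w₁ w₂ _ _ h₁ h₂ => add_mem h₁ h₂) (fun c w _ h => ?_) hz
  · obtain ⟨x, hx, rfl⟩ := hw
    exact ⟨(1 : A) ⊗ₜ[R] (⟨x, hx⟩ : (Submodule.restrictScalars R p)), rfl⟩
  · rw [smul_eq_mul]; exact mul_mem_rangeR c h

lemma kill_rangeL {p : Ideal A} {u v : A →ₗ[R] R} (hu : ∀ x ∈ p, u x = 0)
    {z : A ⊗[R] A} (hz : z ∈ rangeL R p) :
    LinearMap.mul' R R (TensorProduct.map u v z) = 0 := by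
  obtain ⟨w, rfl⟩ := hz
  induction w using TensorProduct.induction_on with
  | zero => simp
  | add w₁ w₂ h₁ h₂ => rw [map_add, map_add, map_add, h₁, h₂, add_zero]
  | tmul s y =>
      rw [LinearMap.rTensor_tmul, Submodule.subtype_apply, TensorProduct.map_tmul,
        LinearMap.mul'_apply, hu _ s.2, zero_mul]

lemma kill_rangeR {p : Ideal A} {u v : A →ₗ[R] R} (hv : ∀ x ∈ p, v x = 0)
    {z : A ⊗[R] A} (hz : z ∈ rangeR R p) :
    LinearMap.mul' R R (TensorProduct.map u v z) = 0 := by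
  obtain ⟨w, rfl⟩ := hz
  induction w using TensorProduct.induction_on with
  | zero => simp
  | add w₁ w₂ h₁ h₂ => rw [map_add, map_add, map_add, h₁, h₂, add_zero]
  | tmul y s =>
      rw [LinearMap.lTensor_tmul, Submodule.subtype_apply, TensorProduct.map_tmul,
        LinearMap.mul'_apply, hv _ s.2, mul_zero]

lemma distF_le_sup (n n' : ℕ) :
    distF R A (n + n' + 1) ≤
      distL R A (augI R A ^ (n + 1)) ⊔ distR R A (augI R A ^ (n' + 1)) := by
  refine distF_le fun a b hab => ?_
  rcases le_or_gt (n + 1) a with h | h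
  · refine le_trans Ideal.mul_le_left ?_
    refine le_trans (Ideal.map_mono (Ideal.pow_le_pow_right h)) le_sup_left
  · have hb : n' + 1 ≤ b := by omega
    refine le_trans Ideal.mul_le_right ?_
    refine le_trans (Ideal.map_mono (Ideal.pow_le_pow_right hb)) le_sup_right

end Part4
/-- Commutativity of the associated graded of the order filtration on the
distribution algebra of a commutative bialgebra `A` over `R`: if `u` vanishes
on `I^(n+1)` and `v` on `I^(n'+1)` (where `I = ker ε` is the augmentation
ideal) and `n + n' ≥ 1`, then the commutator `u*v − v*u` of their convolution
products vanishes on `I^((n+n'−1)+1)`. -/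
theorem stmt_11 (R : Type*) [CommRing R] (A : Type*) [CommRing A]
    [Bialgebra R A] (n n' : ℕ) (hnn' : 1 ≤ n + n') (u v : A →ₗ[R] R)
    (hu : ∀ x ∈ (RingHom.ker (Bialgebra.counitAlgHom R A)) ^ (n + 1), u x = 0)
    (hv : ∀ x ∈ (RingHom.ker (Bialgebra.counitAlgHom R A)) ^ (n' + 1), v x = 0) :
    ∀ x ∈ (RingHom.ker (Bialgebra.counitAlgHom R A)) ^ ((n + n' - 1) + 1),
      (LinearMap.mul' R R ∘ₗ TensorProduct.map u v ∘ₗ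
          (Coalgebra.comul : A →ₗ[R] A ⊗[R] A)) x -
        (LinearMap.mul' R R ∘ₗ TensorProduct.map v u ∘ₗ
          (Coalgebra.comul : A →ₗ[R] A ⊗[R] A)) x = 0 := by
  intro x hx
  have hx' : x ∈ augI R A ^ (n + n') := by
    rwa [Nat.sub_add_cancel hnn'] at hx
  have hD : comul (R := R) x - commRH R A (comul (R := R) x) ∈ distF R A (n + n' + 1) :=
    comm_sub_mem_distF hnn' hx'
  have hJ := distF_le_sup n n' hD
  obtain ⟨z₁, hz₁, z₂, hz₂, hzz⟩ := Submodule.mem_sup.mp hJ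
  have hswap : ∀ z : A ⊗[R] A, LinearMap.mul' R R (TensorProduct.map v u z)
      = LinearMap.mul' R R (TensorProduct.map u v (commRH R A z)) := by
    intro z
    induction z using TensorProduct.induction_on with
    | zero => simp
    | tmul a b =>
        rw [commRH_apply, TensorProduct.map_tmul, TensorProduct.map_tmul,
          LinearMap.mul'_apply, LinearMap.mul'_apply, mul_comm]
    | add z₁ z₂ h₁ h₂ => simp only [map_add, h₁, h₂]
  simp only [LinearMap.comp_apply]
  rw [hswap]
  have h1 : LinearMap.mul' R R (TensorProduct.map u v (comul (R := R) x))
        - LinearMap.mul' R R (TensorProduct.map u v (commRH R A (comul (R := R) x)))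
      = LinearMap.mul' R R (TensorProduct.map u v
          (comul (R := R) x - commRH R A (comul (R := R) x))) := by
    rw [map_sub, map_sub]
  rw [h1, ← hzz, map_add, map_add,
    kill_rangeL hu (distL_le_rangeL _ _ hz₁), kill_rangeR hv (distR_le_rangeR _ _ hz₂),
    add_zero]
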